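/- Let α₁,…,α_N be i.i.d. nonnegative random variables each with density p(x) = (2M·sin(π/M)/√π)·e^{−sin²(π/M)x²}·Q(√2·cos(π/M)·x) on x ≥ 0 (and 0 for x < 0), where M ≥ 2 is an integer. Then for each n ≤ N the density of S_n = α₁ + ⋯ + α_n satisfies p_{S_n}(x) ≤ (Mⁿ·sin(π/M)/√(nπ))·exp(−(1/n)·sin²(π/M)·x²) for all x ≥ 0. -/

import Mathlib

open MeasureTheory ProbabilityTheory Real Set Finset
open scoped ENNReal NNReal

/-- The Gaussian tail function `Q(x) = (1/√(2π)) ∫_x^∞ e^{-t²/2} dt`. -/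
noncomputable def gaussQ (x : ℝ) : ℝ :=
  (Real.sqrt (2 * Real.pi))⁻¹ * ∫ t in Set.Ioi x, Real.exp (-t ^ 2 / 2)

lemma gauss_half_eq : (fun t : ℝ => Real.exp (-t ^ 2 / 2)) =
    fun t : ℝ => Real.exp (-(1/2 : ℝ) * t ^ 2) := by
  funext t; ring_nf

lemma integrable_gauss_half : Integrable fun t : ℝ => Real.exp (-t ^ 2 / 2) := by
  rw [gauss_half_eq]; exact integrable_exp_neg_mul_sq (by norm_num)

lemma gaussQ_nonneg (x : ℝ) : 0 ≤ gaussQ x :=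
  mul_nonneg (inv_nonneg.2 (Real.sqrt_nonneg _))
    (setIntegral_nonneg measurableSet_Ioi fun t _ => (Real.exp_pos _).le)

lemma gaussQ_le_half {x : ℝ} (hx : 0 ≤ x) : gaussQ x ≤ 1 / 2 := by
  have h1 : (∫ t in Set.Ioi x, Real.exp (-t ^ 2 / 2)) ≤
      ∫ t in Set.Ioi (0:ℝ), Real.exp (-t ^ 2 / 2) := by
    refine setIntegral_mono_set integrable_gauss_half.integrableOn
      (Filter.Eventually.of_forall fun t => (Real.exp_pos _).le) ?_
    exact HasSubset.Subset.eventuallyLE (Set.Ioi_subset_Ioi hx)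
  have h2 : (∫ t in Set.Ioi (0:ℝ), Real.exp (-t ^ 2 / 2)) = Real.sqrt (2 * Real.pi) / 2 := by
    rw [gauss_half_eq, integral_gaussian_Ioi]
    norm_num
    ring
  have hs : 0 < Real.sqrt (2 * Real.pi) := Real.sqrt_pos.2 (by positivity)
  rw [gaussQ]
  calc (Real.sqrt (2 * Real.pi))⁻¹ * ∫ t in Set.Ioi x, Real.exp (-t ^ 2 / 2)
      ≤ (Real.sqrt (2 * Real.pi))⁻¹ * (Real.sqrt (2 * Real.pi) / 2) := by
        gcongr
        rw [← h2]; exact h1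
    _ = 1 / 2 := by field_simp

lemma measurable_gaussQ : Measurable gaussQ := by
  have h : Antitone fun x : ℝ => ∫ t in Set.Ioi x, Real.exp (-t ^ 2 / 2) := by
    intro x y hxy
    refine setIntegral_mono_set integrable_gauss_half.integrableOn
      (Filter.Eventually.of_forall fun t => (Real.exp_pos _).le) ?_
    exact HasSubset.Subset.eventuallyLE (Set.Ioi_subset_Ioi hxy)
  exact measurable_const.mul h.measurable

lemma withDensity_conv (g h : ℝ → ℝ≥0∞) (hg : Measurable g) (hh : Measurable h) :
    Measure.map (fun p : ℝ × ℝ => p.1 + p.2)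
        ((volume.withDensity g).prod (volume.withDensity h)) =
      volume.withDensity (fun y => ∫⁻ t, g t * h (y - t)) := by
  have hk : Measurable fun y => ∫⁻ t, g t * h (y - t) := by
    apply Measurable.lintegral_prod_right (f := fun y t => g t * h (y - t))
    exact (hg.comp measurable_snd).mul (hh.comp (measurable_fst.sub measurable_snd))
  ext s hs
  have hA : MeasurableSet ((fun p : ℝ × ℝ => p.1 + p.2) ⁻¹' s) := hs.preimage measurable_add
  rw [Measure.map_apply measurable_add hs, withDensity_apply _ hs,
    Measure.prod_apply hA]
  have step1 : ∀ x : ℝ, (volume.withDensity h) (Prod.mk x ⁻¹' ((fun p : ℝ × ℝ => p.1 + p.2) ⁻¹' s))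
      = ∫⁻ y, s.indicator (fun _ => (1 : ℝ≥0∞)) (x + y) * h y := by
    intro x
    have hpre : Prod.mk x ⁻¹' ((fun p : ℝ × ℝ => p.1 + p.2) ⁻¹' s) = (fun y => x + y) ⁻¹' s := rfl
    rw [hpre, withDensity_apply _ (hs.preimage (measurable_const_add x)),
      ← lintegral_indicator (hs.preimage (measurable_const_add x)) _]
    congr 1
    funext y
    by_cases hy : x + y ∈ s <;>
      simp [Set.indicator, hy, Set.mem_preimage]
  simp_rw [step1]
  rw [lintegral_withDensity_eq_lintegral_mul volume hg]
  swap
  · apply Measurable.lintegral_prod_right (f := fun x y => s.indicator (fun _ => (1:ℝ≥0∞)) (x + y) * h y)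
    exact ((measurable_one.indicator hs).comp measurable_add).mul (hh.comp measurable_snd)
  have step2 : ∀ x : ℝ, (∫⁻ y, s.indicator (fun _ => (1 : ℝ≥0∞)) (x + y) * h y)
      = ∫⁻ y, s.indicator (fun _ => (1 : ℝ≥0∞)) y * h (y - x) := by
    intro x
    have := lintegral_add_left_eq_self
      (fun y => s.indicator (fun _ => (1 : ℝ≥0∞)) y * h (y - x)) x (μ := volume)
    rw [← this]
    congr 1; funext y
    simp [add_sub_cancel_left]
  have step3 : (∫⁻ x, (g * (fun x => ∫⁻ y, s.indicator (fun _ => (1 : ℝ≥0∞)) (x + y) * h y)) x)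
      = ∫⁻ x, ∫⁻ y, g x * (s.indicator (fun _ => (1 : ℝ≥0∞)) y * h (y - x)) := by
    congr 1; funext x
    simp only [Pi.mul_apply]
    rw [step2 x, ← lintegral_const_mul _ ?_]
    exact ((measurable_one.indicator hs)).mul (hh.comp (measurable_id.sub measurable_const))
  rw [step3, lintegral_lintegral_swap]
  swap
  · apply Measurable.aemeasurable
    exact (hg.comp measurable_fst).mul
      (((measurable_one.indicator hs).comp measurable_snd).mul
        (hh.comp (measurable_snd.sub measurable_fst)))
  rw [← lintegral_indicator hs _]
  congr 1
  funext y
  by_cases hy : y ∈ s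
  · simp [Set.indicator_of_mem hy]
  · simp [Set.indicator_of_notMem hy]

lemma gauss_conv_integrand {a b : ℝ} (ha : 0 < a) (hb : 0 < b) (y t : ℝ) :
    Real.exp (-a * t ^ 2) * Real.exp (-b * (y - t) ^ 2) =
      Real.exp (-(a * b / (a + b)) * y ^ 2) *
        Real.exp (-(a + b) * (t - b * y / (a + b)) ^ 2) := by
  have hab : (0:ℝ) < a + b := by linarith
  rw [← Real.exp_add, ← Real.exp_add]
  congr 1
  field_simp
  ring

lemma gauss_conv {a b : ℝ} (ha : 0 < a) (hb : 0 < b) (y : ℝ) :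
    (∫ t, Real.exp (-a * t ^ 2) * Real.exp (-b * (y - t) ^ 2)) =
      Real.sqrt (Real.pi / (a + b)) * Real.exp (-(a * b / (a + b)) * y ^ 2) := by
  have hab : (0:ℝ) < a + b := by linarith
  simp_rw [gauss_conv_integrand ha hb y]
  rw [integral_const_mul]
  rw [show (∫ t : ℝ, Real.exp (-(a + b) * (t - b * y / (a + b)) ^ 2)) =
      ∫ t : ℝ, Real.exp (-(a + b) * t ^ 2) from
    integral_sub_right_eq_self (fun t => Real.exp (-(a + b) * t ^ 2)) (b * y / (a + b))]
  rw [integral_gaussian]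
  ring

lemma gauss_conv_integrable {a b : ℝ} (ha : 0 < a) (hb : 0 < b) (y : ℝ) :
    Integrable fun t => Real.exp (-a * t ^ 2) * Real.exp (-b * (y - t) ^ 2) := by
  have hab : (0:ℝ) < a + b := by linarith
  have : (fun t => Real.exp (-a * t ^ 2) * Real.exp (-b * (y - t) ^ 2)) =
      fun t => Real.exp (-(a * b / (a + b)) * y ^ 2) *
        Real.exp (-(a + b) * (t - b * y / (a + b)) ^ 2) := by
    funext t; exact gauss_conv_integrand ha hb y t
  rw [this]
  exact (((integrable_exp_neg_mul_sq hab).comp_sub_right (b * y / (a + b))).const_mul _)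

lemma conv_bound {a b C D : ℝ} (ha : 0 < a) (hb : 0 < b) (hC : 0 ≤ C) (hD : 0 ≤ D)
    {g h : ℝ → ℝ≥0∞}
    (hgB : ∀ x, g x ≤ ENNReal.ofReal (C * Real.exp (-a * x ^ 2)))
    (hhB : ∀ x, h x ≤ ENNReal.ofReal (D * Real.exp (-b * x ^ 2))) (y : ℝ) :
    (∫⁻ t, g t * h (y - t)) ≤
      ENNReal.ofReal (C * D * Real.sqrt (Real.pi / (a + b)) *
        Real.exp (-(a * b / (a + b)) * y ^ 2)) := by
  calc (∫⁻ t, g t * h (y - t))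
      ≤ ∫⁻ t, ENNReal.ofReal (C * Real.exp (-a * t ^ 2)) *
          ENNReal.ofReal (D * Real.exp (-b * (y - t) ^ 2)) :=
        lintegral_mono fun t => mul_le_mul' (hgB t) (hhB (y - t))
    _ = ∫⁻ t, ENNReal.ofReal ((C * D) * (Real.exp (-a * t ^ 2) * Real.exp (-b * (y - t) ^ 2))) := by
        congr 1; funext t
        rw [← ENNReal.ofReal_mul (by positivity)]
        ring_nf
    _ = ENNReal.ofReal (∫ t, (C * D) * (Real.exp (-a * t ^ 2) * Real.exp (-b * (y - t) ^ 2))) := by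
        rw [← ofReal_integral_eq_lintegral_ofReal
          ((gauss_conv_integrable ha hb y).const_mul _)
          (Filter.Eventually.of_forall fun t => by positivity)]
    _ = ENNReal.ofReal (C * D * Real.sqrt (Real.pi / (a + b)) *
        Real.exp (-(a * b / (a + b)) * y ^ 2)) := by
        rw [integral_const_mul, gauss_conv ha hb y]
        ring_nf

lemma const_step (M n : ℕ) (hn : 1 ≤ n) {sn : ℝ} (hs : 0 < sn) (y : ℝ) :
    (M : ℝ) * sn / Real.sqrt Real.pi * ((M : ℝ) ^ n * sn / Real.sqrt (n * Real.pi)) *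
        Real.sqrt (Real.pi / (sn ^ 2 + 1 / (n : ℝ) * sn ^ 2)) *
        Real.exp (-(sn ^ 2 * (1 / (n : ℝ) * sn ^ 2) / (sn ^ 2 + 1 / (n : ℝ) * sn ^ 2)) * y ^ 2) =
      (M : ℝ) ^ (n + 1) * sn / Real.sqrt ((n + 1 : ℕ) * Real.pi) *
        Real.exp (-(1 / ((n + 1 : ℕ) : ℝ)) * sn ^ 2 * y ^ 2) := by
  have hπ := Real.pi_pos
  have hnR : (0 : ℝ) < n := by exact_mod_cast hn
  have hexp : -(sn ^ 2 * (1 / (n : ℝ) * sn ^ 2) / (sn ^ 2 + 1 / (n : ℝ) * sn ^ 2)) * y ^ 2 =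
      -(1 / ((n + 1 : ℕ) : ℝ)) * sn ^ 2 * y ^ 2 := by
    have hden : sn ^ 2 + 1 / (n : ℝ) * sn ^ 2 ≠ 0 := by positivity
    push_cast
    field_simp
  rw [hexp]
  congr 1
  have h1 : sn ^ 2 + 1 / (n : ℝ) * sn ^ 2 = sn ^ 2 * (((n : ℝ) + 1) / n) := by
    field_simp
  have h2 : Real.pi / (sn ^ 2 * (((n : ℝ) + 1) / n)) =
      (Real.pi * n) / (sn ^ 2 * ((n : ℝ) + 1)) := by
    rw [div_eq_div_iff (by positivity) (by positivity)]
    field_simp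
  have e3 : Real.sqrt (Real.pi / (sn ^ 2 + 1 / (n : ℝ) * sn ^ 2)) =
      Real.sqrt Real.pi * Real.sqrt n / (sn * Real.sqrt ((n : ℝ) + 1)) := by
    rw [h1, h2, Real.sqrt_div (by positivity), Real.sqrt_mul Real.pi_pos.le,
      Real.sqrt_mul (sq_nonneg sn), Real.sqrt_sq hs.le]
  have e1 : Real.sqrt ((n : ℝ) * Real.pi) = Real.sqrt n * Real.sqrt Real.pi :=
    Real.sqrt_mul (by positivity) _
  have e2 : Real.sqrt (((n + 1 : ℕ) : ℝ) * Real.pi) =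
      Real.sqrt ((n : ℝ) + 1) * Real.sqrt Real.pi := by
    push_cast; exact Real.sqrt_mul (by positivity) _
  rw [e3, e1, e2]
  have hsp : Real.sqrt Real.pi ≠ 0 := by positivity
  have hsn' : Real.sqrt (n : ℝ) ≠ 0 := by positivity
  have hsn1 : Real.sqrt ((n : ℝ) + 1) ≠ 0 := by positivity
  field_simp
  ring

theorem sum_density_bound {Ω : Type*} [MeasureSpace Ω]
    [IsProbabilityMeasure (ℙ : Measure Ω)]
    (M N : ℕ) (hM : 2 ≤ M) (hN : 1 ≤ N)
    (α : Fin N → Ω → ℝ) (hmα : ∀ i, Measurable (α i))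
    (hindep : iIndepFun α ℙ)
    (hdist : ∀ i, Measure.map (α i) ℙ = volume.withDensity (fun x =>
      ENNReal.ofReal (if 0 ≤ x then
        2 * M * Real.sin (Real.pi / M) / Real.sqrt Real.pi *
          Real.exp (-(Real.sin (Real.pi / M) ^ 2) * x ^ 2) *
          gaussQ (Real.sqrt 2 * Real.cos (Real.pi / M) * x)
      else 0))) :
    ∀ n : ℕ, 1 ≤ n → n ≤ N →
      ∃ f : ℝ → ℝ,
        Measure.map (fun ω => ∑ i ∈ Finset.univ.filter (fun i : Fin N => (i : ℕ) < n), α i ω) ℙ =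
          volume.withDensity (fun x => ENNReal.ofReal (f x)) ∧
        ∀ x : ℝ, 0 ≤ x →
          f x ≤ (M : ℝ) ^ n * Real.sin (Real.pi / M) / Real.sqrt (n * Real.pi) *
            Real.exp (-(1 / n) * Real.sin (Real.pi / M) ^ 2 * x ^ 2) := by
  have hπ := Real.pi_pos
  set sn : ℝ := Real.sin (Real.pi / M) with hsn_def
  have hMR : (2:ℝ) ≤ M := by exact_mod_cast hM
  have hθpos : 0 < Real.pi / M := by positivity
  have hθle : Real.pi / M ≤ Real.pi / 2 := by
    apply div_le_div_of_nonneg_left hπ.le two_pos hMR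
  have hsin : 0 < sn := Real.sin_pos_of_pos_of_lt_pi hθpos (by nlinarith)
  have hcos : 0 ≤ Real.cos (Real.pi / M) :=
    Real.cos_nonneg_of_mem_Icc ⟨by linarith, hθle⟩
  -- the one-variable density
  set p : ℝ → ℝ := fun x => if 0 ≤ x then
      2 * M * sn / Real.sqrt Real.pi * Real.exp (-(sn ^ 2) * x ^ 2) *
        gaussQ (Real.sqrt 2 * Real.cos (Real.pi / M) * x)
    else 0 with hp_def
  have hdist' : ∀ i, Measure.map (α i) ℙ =
      volume.withDensity (fun x => ENNReal.ofReal (p x)) := hdist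
  have hmp : Measurable fun x => ENNReal.ofReal (p x) := by
    apply ENNReal.measurable_ofReal.comp
    apply Measurable.ite (measurableSet_le measurable_const measurable_id)
    · exact ((measurable_const.mul (by fun_prop)).mul
        (measurable_gaussQ.comp (by fun_prop)))
    · exact measurable_const
  have hp1 : ∀ x : ℝ, ENNReal.ofReal (p x) ≤
      ENNReal.ofReal ((M : ℝ) * sn / Real.sqrt Real.pi * Real.exp (-(sn ^ 2) * x ^ 2)) := by
    intro x
    apply ENNReal.ofReal_le_ofReal
    rw [hp_def]
    by_cases hx : 0 ≤ x
    · simp only [if_pos hx]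
      have hql := gaussQ_le_half (mul_nonneg (mul_nonneg (Real.sqrt_nonneg 2) hcos) hx)
      have hpref : 0 ≤ 2 * (M:ℝ) * sn / Real.sqrt Real.pi * Real.exp (-(sn ^ 2) * x ^ 2) :=
        mul_nonneg (div_nonneg (mul_nonneg (by positivity) hsin.le) (Real.sqrt_nonneg _))
          (Real.exp_pos _).le
      calc 2 * (M:ℝ) * sn / Real.sqrt Real.pi * Real.exp (-(sn ^ 2) * x ^ 2) *
            gaussQ (Real.sqrt 2 * Real.cos (Real.pi / M) * x)
          ≤ 2 * (M:ℝ) * sn / Real.sqrt Real.pi * Real.exp (-(sn ^ 2) * x ^ 2) * (1/2) :=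
            mul_le_mul_of_nonneg_left hql hpref
        _ = (M : ℝ) * sn / Real.sqrt Real.pi * Real.exp (-(sn ^ 2) * x ^ 2) := by ring
    · simp only [if_neg hx]
      exact mul_nonneg (div_nonneg (mul_nonneg (by positivity) hsin.le) (Real.sqrt_nonneg _))
        (Real.exp_pos _).le
  -- the key induction
  have key : ∀ n : ℕ, 1 ≤ n → n ≤ N → ∃ g : ℝ → ℝ≥0∞, Measurable g ∧
      Measure.map (fun ω => ∑ i ∈ Finset.univ.filter (fun i : Fin N => (i : ℕ) < n), α i ω) ℙ =
        volume.withDensity g ∧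
      ∀ x : ℝ, g x ≤ ENNReal.ofReal ((M : ℝ) ^ n * sn / Real.sqrt (n * Real.pi) *
        Real.exp (-(1 / n) * sn ^ 2 * x ^ 2)) := by
    intro n
    induction n with
    | zero => omega
    | succ n ih =>
      intro _ hle
      by_cases hn0 : n = 0
      · -- base case : n+1 = 1
        subst hn0
        have h0N : 0 < N := hN
        have hfil : Finset.univ.filter (fun i : Fin N => (i : ℕ) < 1) = {(⟨0, h0N⟩ : Fin N)} := by
          ext i
          simp [Finset.mem_filter, Nat.lt_one_iff, Fin.ext_iff]
        have hfun : (fun ω => ∑ i ∈ Finset.univ.filter (fun i : Fin N => (i : ℕ) < 1), α i ω) =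
            α ⟨0, h0N⟩ := by
          funext ω; rw [hfil, Finset.sum_singleton]
        refine ⟨fun x => ENNReal.ofReal (p x), hmp, by rw [hfun]; exact hdist' _, ?_⟩
        intro x
        refine (hp1 x).trans (le_of_eq ?_)
        congr 1
        push_cast
        norm_num
      · -- inductive step
        have hn1 : 1 ≤ n := Nat.one_le_iff_ne_zero.2 hn0
        have hnN : n < N := lt_of_lt_of_le (Nat.lt_succ_self n) hle
        obtain ⟨g, hgm, hgmap, hgb⟩ := ih hn1 (le_trans (Nat.le_succ n) hle)
        set j : Fin N := ⟨n, hnN⟩ with hj_def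
        have hfil : Finset.univ.filter (fun i : Fin N => (i : ℕ) < n + 1) =
            insert j (Finset.univ.filter fun i : Fin N => (i : ℕ) < n) := by
          ext i
          simp only [Finset.mem_insert, Finset.mem_filter, Finset.mem_univ, true_and,
            Fin.ext_iff, hj_def, Nat.lt_succ_iff_lt_or_eq]
          tauto
        have hjnot : j ∉ Finset.univ.filter (fun i : Fin N => (i : ℕ) < n) := by
          simp [hj_def]
        have hSm : Measurable fun ω => ∑ i ∈ Finset.univ.filter
            (fun i : Fin N => (i : ℕ) < n), α i ω :=
          Finset.measurable_sum _ fun i _ => hmα i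
        have hsum_eq : (∑ i ∈ Finset.univ.filter (fun i : Fin N => (i : ℕ) < n), α i) =
            fun ω => ∑ i ∈ Finset.univ.filter (fun i : Fin N => (i : ℕ) < n), α i ω := by
          funext ω; simp [Finset.sum_apply]
        have hind : IndepFun (α j) (fun ω => ∑ i ∈ Finset.univ.filter
            (fun i : Fin N => (i : ℕ) < n), α i ω) ℙ := by
          have := hindep.indepFun_finset_sum_of_notMem hmα hjnot
          rw [hsum_eq] at this
          exact this.symm
        have hmap_pair : Measure.map (fun ω => (α j ω, ∑ i ∈ Finset.univ.filter
            (fun i : Fin N => (i : ℕ) < n), α i ω)) ℙ =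
            (Measure.map (α j) ℙ).prod (Measure.map (fun ω => ∑ i ∈ Finset.univ.filter
              (fun i : Fin N => (i : ℕ) < n), α i ω) ℙ) :=
          (indepFun_iff_map_prod_eq_prod_map_map (hmα j).aemeasurable hSm.aemeasurable).mp hind
        have hfun : (fun ω => ∑ i ∈ Finset.univ.filter (fun i : Fin N => (i : ℕ) < n + 1), α i ω)
            = fun ω => α j ω + ∑ i ∈ Finset.univ.filter (fun i : Fin N => (i : ℕ) < n), α i ω := by
          funext ω; rw [hfil, Finset.sum_insert hjnot]
        set k : ℝ → ℝ≥0∞ := fun y => ∫⁻ t, ENNReal.ofReal (p t) * g (y - t) with hk_def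
        have hkm : Measurable k := by
          apply Measurable.lintegral_prod_right
            (f := fun y t => ENNReal.ofReal (p t) * g (y - t))
          exact (hmp.comp measurable_snd).mul (hgm.comp (measurable_fst.sub measurable_snd))
        have hmap : Measure.map (fun ω => ∑ i ∈ Finset.univ.filter
            (fun i : Fin N => (i : ℕ) < n + 1), α i ω) ℙ = volume.withDensity k := by
          rw [hfun]
          have hcomp : (fun ω => α j ω + ∑ i ∈ Finset.univ.filter
              (fun i : Fin N => (i : ℕ) < n), α i ω) =
              (fun q : ℝ × ℝ => q.1 + q.2) ∘ (fun ω => (α j ω, ∑ i ∈ Finset.univ.filter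
                (fun i : Fin N => (i : ℕ) < n), α i ω)) := rfl
          rw [hcomp, ← Measure.map_map measurable_add ((hmα j).prodMk hSm), hmap_pair,
            hdist' j, hgmap, withDensity_conv _ _ hmp hgm]
        refine ⟨k, hkm, hmap, ?_⟩
        intro y
        have hb : (0:ℝ) < 1 / (n : ℝ) * sn ^ 2 := by
          have : (0:ℝ) < n := by exact_mod_cast hn1
          positivity
        have hgb' : ∀ x : ℝ, g x ≤ ENNReal.ofReal
            ((M : ℝ) ^ n * sn / Real.sqrt (n * Real.pi) *
              Real.exp (-(1 / (n : ℝ) * sn ^ 2) * x ^ 2)) := by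
          intro x
          refine (hgb x).trans (le_of_eq ?_)
          congr 2
          ring
        have hp1' : ∀ x : ℝ, ENNReal.ofReal (p x) ≤ ENNReal.ofReal
            ((M : ℝ) * sn / Real.sqrt Real.pi * Real.exp (-(sn ^ 2) * x ^ 2)) := hp1
        have hbound := conv_bound (a := sn ^ 2) (b := 1 / (n : ℝ) * sn ^ 2)
          (by positivity) hb
          (by positivity : (0:ℝ) ≤ (M : ℝ) * sn / Real.sqrt Real.pi)
          (by positivity : (0:ℝ) ≤ (M : ℝ) ^ n * sn / Real.sqrt (n * Real.pi))
          hp1' hgb' y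
        refine hbound.trans (le_of_eq ?_)
        congr 1
        exact const_step M n hn1 hsin y
  -- conclude
  intro n h1 hn
  obtain ⟨g, hgm, hgmap, hgb⟩ := key n h1 hn
  refine ⟨fun x => (g x).toReal, ?_, ?_⟩
  · rw [hgmap]
    congr 1
    funext x
    exact (ENNReal.ofReal_toReal ((hgb x).trans_lt ENNReal.ofReal_lt_top).ne).symm
  · intro x _
    refine ENNReal.toReal_le_of_le_ofReal ?_ (hgb x)
    exact mul_nonneg (div_nonneg (mul_nonneg (by positivity) hsin.le) (Real.sqrt_nonneg _))
      (Real.exp_pos _).le
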